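/- arXiv:1308.3086 — 6 statements merged into one kernel-verified Lean document; each statement's English description precedes it below -/
import Mathlib

section
/- For a vector field X on E with ⟨X, dt⟩ = 1, the complete lift X̃ satisfies (i_{X̃} Θ) ∧ dt = −Θ, where Θ = p_i dq^i ∧ dt. -/
noncomputable section

open scoped BigOperators

/- Coordinate model for the paper "Lifting geometric objects to the dual of the
first jet bundle of a bundle fibred over ℝ".

`EE n` is the total space of `τ : E → ℝ`, with coordinates `(t, qⁱ)`.
`MM n` is `J¹τ* = T*E/⟨dt⟩`, with coordinates `(t, qⁱ, pᵢ)`.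
`TS n` is the extended dual `T*E`, with coordinates `(t, qⁱ, p₀, pᵢ)`.
Vector fields and 1-forms are given by their component functions (a vector
field on a vector space `V` is a map `V → V`, a covector field likewise via
the standard pairing). -/

abbrev EE (n : ℕ) : Type := ℝ × (Fin n → ℝ)
abbrev MM (n : ℕ) : Type := EE n × (Fin n → ℝ)
abbrev TS (n : ℕ) : Type := EE n × (ℝ × (Fin n → ℝ))

/-- the coordinate direction `∂/∂t` (equally, the covector `dt`) on `E` -/
def edt {n : ℕ} : EE n := (1, 0)
/-- the coordinate direction `∂/∂qⁱ` (equally, the covector `dqⁱ`) on `E` -/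
def eqv {n : ℕ} (i : Fin n) : EE n := (0, Pi.single i 1)

/-- pairing of a tangent vector and a covector on `E`, in coordinates -/
def pairE {n : ℕ} (u a : EE n) : ℝ := u.1 * a.1 + ∑ i, u.2 i * a.2 i

/-- pairing of a tangent vector and a covector on `J¹τ*`, in coordinates -/
def pairM {n : ℕ} (u a : MM n) : ℝ := pairE u.1 a.1 + ∑ i, u.2 i * a.2 i

/-- the fibre-linear function `F_X` on `J¹τ*` associated to a vertical vector
field `X = Xⁱ ∂/∂qⁱ` on `E`:  `F_X(t,q,p) = pᵢ Xⁱ(t,q)` -/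
def FX {n : ℕ} (X : EE n → EE n) : MM n → ℝ := fun m => ∑ i, m.2 i * (X m.1).2 i

/-- vertical lift `α^v = αᵢ ∂/∂pᵢ` of a 1-form `α` on `E` -/
def vlift1 {n : ℕ} (α : EE n → EE n) : MM n → MM n := fun m => ((0, 0), (α m.1).2)

/-- complete lift `X̃ = X⁰ ∂/∂t + Xⁱ ∂/∂qⁱ - p_j (∂X^j/∂qⁱ) ∂/∂pᵢ`
of a vector field `X` on `E` (for `X` vertical or with `⟨X,dt⟩ = 1`) -/
def clift {n : ℕ} (X : EE n → EE n) : MM n → MM n :=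
  fun m => (X m.1, fun i => - ∑ j, m.2 j * fderiv ℝ (fun e => (X e).2 j) m.1 (eqv i))

/-- Lie bracket of vector fields on a vector space -/
def vbracket {V : Type} [NormedAddCommGroup V] [NormedSpace ℝ V] (A B : V → V) : V → V :=
  fun x => fderiv ℝ B x (A x) - fderiv ℝ A x (B x)

/-- the canonical 2-form `Θ = pᵢ dqⁱ ∧ dt` on `J¹τ*` -/
def Theta {n : ℕ} (m u v : MM n) : ℝ :=
  ∑ i, m.2 i * (u.1.2 i * v.1.1 - v.1.2 i * u.1.1)

/-- Lie derivative of a 2-form `ω` along a vector field `V`,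
evaluated on constant vector fields `u`, `v` -/
def lieDer2 {n : ℕ} (V : MM n → MM n) (ω : MM n → MM n → MM n → ℝ) (m u v : MM n) : ℝ :=
  fderiv ℝ (fun x => ω x u v) m (V m) + ω m (fderiv ℝ V m u) v + ω m u (fderiv ℝ V m v)

/-- Lie derivative `L_X α` of a 1-form on `E`, as a covector field -/
def lieDer1 {n : ℕ} (X α : EE n → EE n) (e : EE n) : EE n :=
  (fderiv ℝ (fun x => pairE edt (α x)) e (X e) + pairE (fderiv ℝ X e edt) (α e),
   fun i => fderiv ℝ (fun x => pairE (eqv i) (α x)) e (X e) + pairE (fderiv ℝ X e (eqv i)) (α e))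

/-- Lie derivative `L_X S` of a type (1,1) tensor `S` along a vector field `X`,
evaluated on a constant vector field `u`:  `(L_X S)(u) = [X, S u] - S [X, u]` -/
def lieDerT {V : Type} [NormedAddCommGroup V] [NormedSpace ℝ V]
    (X : V → V) (S : V → V → V) : V → V → V :=
  fun x u => fderiv ℝ (fun y => S y u) x (X x) - fderiv ℝ X x (S x u) + S x (fderiv ℝ X x u)

/-- the Nijenhuis torsion `N_S(u,v) = [Su,Sv] + S²[u,v] - S[Su,v] - S[u,Sv]`
of a type (1,1) tensor `S`, evaluated on constant vector fields -/
def nijT {V : Type} [NormedAddCommGroup V] [NormedSpace ℝ V]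
    (S : V → V → V) (x u v : V) : V :=
  fderiv ℝ (fun y => S y v) x (S x u) - fderiv ℝ (fun y => S y u) x (S x v)
    + S x (fderiv ℝ (fun y => S y u) x v) - S x (fderiv ℝ (fun y => S y v) x u)

/-- adjoint action `S(α)`, `⟨u, S(α)⟩ = ⟨S(u), α⟩`, of a (1,1) tensor on a 1-form -/
def adjS {n : ℕ} (S : EE n → EE n → EE n) (α : EE n → EE n) : EE n → EE n :=
  fun e => (pairE (S e edt) (α e), fun j => pairE (S e (eqv j)) (α e))

/-- vertical lift `S^v = pᵢ Sⁱ_j ∂/∂p_j` (a vector field on `J¹τ*`) of a (1,1) tensor -/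
def vlift11 {n : ℕ} (S : EE n → EE n → EE n) : MM n → MM n :=
  fun m => ((0, 0), fun j => ∑ i, m.2 i * (S m.1 (eqv j)).2 i)

/-- horizontal lift `S^h = pᵢ Sⁱ_j dq^j + pᵢ Sⁱ_0 dt` (a semi-basic 1-form on `J¹τ*`,
given as a covector field) of a (1,1) tensor -/
def hliftC {n : ℕ} (S : EE n → EE n → EE n) : MM n → MM n :=
  fun m => ((∑ i, m.2 i * (S m.1 edt).2 i, fun j => ∑ i, m.2 i * (S m.1 (eqv j)).2 i), 0)

/-- matrix entry `Sⁱ_j` of a (1,1) tensor on `E` -/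
def Rij {n : ℕ} (S : EE n → EE n → EE n) (i j : Fin n) (e : EE n) : ℝ := (S e (eqv j)).2 i
/-- matrix entry `Sⁱ_0` of a (1,1) tensor on `E` -/
def Ri0 {n : ℕ} (S : EE n → EE n → EE n) (i : Fin n) (e : EE n) : ℝ := (S e edt).2 i

/-- the complete lift `S̃` on `J¹τ*` of a (1,1) tensor `S` on `E` (with `S(dt) = 0`),
in coordinates:
`S̃ = Sⁱ_j (∂/∂qⁱ ⊗ dq^j + ∂/∂p_j ⊗ dpᵢ) + Sⁱ_0 ∂/∂qⁱ ⊗ dt`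
`  + pᵢ(∂Sⁱ_j/∂q^k − ∂Sⁱ_k/∂q^j) ∂/∂p_j ⊗ dq^k + pᵢ(∂Sⁱ_k/∂t − ∂Sⁱ_0/∂q^k) ∂/∂p_k ⊗ dt` -/
def tlift {n : ℕ} (S : EE n → EE n → EE n) : MM n → MM n → MM n :=
  fun m u =>
    ((0, fun i => (∑ j, Rij S i j m.1 * u.1.2 j) + Ri0 S i m.1 * u.1.1),
     fun j => (∑ i, Rij S i j m.1 * u.2 i)
       + (∑ k, (∑ i, m.2 i *
           (fderiv ℝ (Rij S i j) m.1 (eqv k) - fderiv ℝ (Rij S i k) m.1 (eqv j))) * u.1.2 k)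
       + (∑ i, m.2 i *
           (fderiv ℝ (Rij S i j) m.1 edt - fderiv ℝ (Ri0 S i) m.1 (eqv j))) * u.1.1)

/-- exterior derivative of a 1-form `α` on `E`, evaluated on constant vector fields -/
def dOne {n : ℕ} (α : EE n → EE n) (e a b : EE n) : ℝ :=
  fderiv ℝ (fun x => pairE b (α x)) e a - fderiv ℝ (fun x => pairE a (α x)) e b

/-- projection `ρ : T*E → J¹τ*` (forgetting `p₀`) -/
def rho {n : ℕ} (z : TS n) : MM n := (z.1, z.2.2)
/-- tangent map of `ρ` -/
def Trho {n : ℕ} (w : TS n) : MM n := (w.1, w.2.2)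

/-- the complete lift `S̃_{T*}` of a (1,1) tensor `S` (with `S(dt)=0`) to `T*E`:
the expression of `tlift` plus the extra terms
`Sⁱ_0 ∂/∂p₀ ⊗ dpᵢ + pᵢ(∂Sⁱ_0/∂q^k − ∂Sⁱ_k/∂t) ∂/∂p₀ ⊗ dq^k` -/
def tliftStar {n : ℕ} (S : EE n → EE n → EE n) : TS n → TS n → TS n :=
  fun z w =>
    ((0, fun i => (∑ j, Rij S i j z.1 * w.1.2 j) + Ri0 S i z.1 * w.1.1),
     ((∑ i, Ri0 S i z.1 * w.2.2 i)
        + ∑ k, (∑ i, z.2.2 i *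
            (fderiv ℝ (Ri0 S i) z.1 (eqv k) - fderiv ℝ (Rij S i k) z.1 edt)) * w.1.2 k,
      fun j => (tlift S (rho z) (Trho w)).2 j))

/-- Lie derivative of a 1-form `θ` on `J¹τ*` along a vector field `Z`, as covector field -/
def lieDer1M {n : ℕ} (Z θ : MM n → MM n) (m : MM n) : MM n :=
  ((fderiv ℝ (fun x => pairM ((edt : EE n), 0) (θ x)) m (Z m)
      + pairM (fderiv ℝ Z m ((edt : EE n), 0)) (θ m),
    fun i => fderiv ℝ (fun x => pairM ((eqv i : EE n), 0) (θ x)) m (Z m)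
      + pairM (fderiv ℝ Z m ((eqv i : EE n), 0)) (θ m)),
   fun i => fderiv ℝ (fun x => pairM (0, Pi.single i 1) (θ x)) m (Z m)
      + pairM (fderiv ℝ Z m (0, Pi.single i 1)) (θ m))

/-- adjoint action of a (1,1) tensor on `J¹τ*` on a 1-form `σ` -/
def adjM {n : ℕ} (T : MM n → MM n → MM n) (σ : MM n → MM n) : MM n → MM n :=
  fun m => ((pairM (T m ((edt : EE n), 0)) (σ m), fun i => pairM (T m ((eqv i : EE n), 0)) (σ m)),
            fun i => pairM (T m (0, Pi.single i 1)) (σ m))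

/-- the canonical Poisson map `P : Ω¹(J¹τ*) → X(J¹τ*)` of `Λ = ∂/∂qⁱ ∧ ∂/∂pᵢ`,
determined by `Λ(σ,τ) = ⟨P(σ), τ⟩` -/
def Pmap {n : ℕ} (σ : MM n → MM n) : MM n → MM n :=
  fun m => ((0, fun i => -(σ m).2 i), fun i => (σ m).1.2 i)

/-- the differential `dF_X` as a covector field on `J¹τ*` -/
def dFc {n : ℕ} (X : EE n → EE n) (m : MM n) : MM n :=
  ((fderiv ℝ (FX X) m ((edt : EE n), 0), fun i => fderiv ℝ (FX X) m ((eqv i : EE n), 0)),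
   fun i => fderiv ℝ (FX X) m (0, Pi.single i 1))
/-- For a vector field `X` on `E` with `⟨X,dt⟩ = 1`, the complete lift
`X̃` satisfies `(i_{X̃} Θ) ∧ dt = −Θ`. -/
theorem statement4 {n : ℕ} (X : EE n → EE n) (hX : ContDiff ℝ (⊤ : ℕ∞) X)
    (hXt : ∀ e, (X e).1 = 1) :
    ∀ m u v : MM n,
      Theta m (clift X m) u * v.1.1 - Theta m (clift X m) v * u.1.1 = - Theta m u v := by
  intro m u v
  simp only [Theta, clift, hXt]
  rw [Finset.sum_mul, Finset.sum_mul, ← Finset.sum_sub_distrib, ← Finset.sum_neg_distrib]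
  exact Finset.sum_congr rfl fun i _ => by ring
end
end

section
/- For a 1-form α on E and a vector field X on E that is vertical or satisfies ⟨X,dt⟩ = 1, the Lie bracket of the complete lift X̃ and the vertical lift α^v satisfies [X̃, α^v] = (L_X α)^v. -/
noncomputable section

open scoped BigOperators

/-- For a 1-form `α` on `E` and a vector field `X` on `E` that is
vertical or has `⟨X,dt⟩ = 1`, one has `[X̃, α^v] = (L_X α)^v`. -/
theorem statement6 {n : ℕ} (α X : EE n → EE n)
    (hα : ContDiff ℝ (⊤ : ℕ∞) α) (hX : ContDiff ℝ (⊤ : ℕ∞) X)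
    (c : ℝ) (hc : c = 0 ∨ c = 1) (hXc : ∀ e, (X e).1 = c) :
    ∀ m : MM n, vbracket (clift X) (vlift1 α) m = vlift1 (lieDer1 X α) m := by
  intro m
  have hαd : Differentiable ℝ α := hα.differentiable (by simp)
  have hXd : Differentiable ℝ X := hX.differentiable (by simp)
  -- component functions of X
  have hXj : ∀ j : Fin n, ContDiff ℝ (⊤ : ℕ∞) (fun e => (X e).2 j) := fun j =>
    ((ContinuousLinearMap.proj j).comp (ContinuousLinearMap.snd ℝ ℝ (Fin n → ℝ))).contDiff.comp hX
  -- the functions φ j i e = ∂X^j/∂qⁱ (e)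
  set φ : Fin n → Fin n → EE n → ℝ :=
    fun j i e => fderiv ℝ (fun e' => (X e').2 j) e (eqv i) with hφdef
  have hφC : ∀ j i, Differentiable ℝ (φ j i) := by
    intro j i
    have h1 : ContDiff ℝ (⊤ : ℕ∞) (fderiv ℝ (fun e' => (X e').2 j)) :=
      (hXj j).fderiv_right le_rfl
    exact (((ContinuousLinearMap.apply ℝ ℝ (eqv i : EE n)).contDiff.comp h1).differentiable (by simp))
  -- derivative of vlift1 α
  have hv : HasFDerivAt (vlift1 α)
      ((0 : MM n →L[ℝ] EE n).prod
        ((ContinuousLinearMap.snd ℝ ℝ (Fin n → ℝ)).comp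
          ((fderiv ℝ α m.1).comp (ContinuousLinearMap.fst ℝ (EE n) (Fin n → ℝ))))) m := by
    have h2 : HasFDerivAt (fun x : MM n => α x.1)
        ((fderiv ℝ α m.1).comp (ContinuousLinearMap.fst ℝ (EE n) (Fin n → ℝ))) m :=
      ((hαd m.1).hasFDerivAt).comp m hasFDerivAt_fst
    exact (hasFDerivAt_const ((0, 0) : EE n) m).prodMk h2.snd
  -- derivative of clift X
  have hcl : HasFDerivAt (clift X)
      (((fderiv ℝ X m.1).comp (ContinuousLinearMap.fst ℝ (EE n) (Fin n → ℝ))).prod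
        (ContinuousLinearMap.pi fun i =>
          -∑ j, (m.2 j • ((fderiv ℝ (φ j i) m.1).comp (ContinuousLinearMap.fst ℝ (EE n) (Fin n → ℝ)))
            + φ j i m.1 • ((ContinuousLinearMap.proj j).comp
                (ContinuousLinearMap.snd ℝ (EE n) (Fin n → ℝ)))))) m := by
    have h1 : HasFDerivAt (fun x : MM n => X x.1)
        ((fderiv ℝ X m.1).comp (ContinuousLinearMap.fst ℝ (EE n) (Fin n → ℝ))) m :=
      ((hXd m.1).hasFDerivAt).comp m hasFDerivAt_fst
    have h2 : ∀ i : Fin n, HasFDerivAt (fun x : MM n => -∑ j, x.2 j * φ j i x.1)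
        (-∑ j, (m.2 j • ((fderiv ℝ (φ j i) m.1).comp (ContinuousLinearMap.fst ℝ (EE n) (Fin n → ℝ)))
            + φ j i m.1 • ((ContinuousLinearMap.proj j).comp
                (ContinuousLinearMap.snd ℝ (EE n) (Fin n → ℝ))))) m := by
      intro i
      refine HasFDerivAt.neg (HasFDerivAt.fun_sum ?_)
      intro j _
      have hc1 : HasFDerivAt (fun x : MM n => x.2 j)
          ((ContinuousLinearMap.proj j).comp (ContinuousLinearMap.snd ℝ (EE n) (Fin n → ℝ))) m :=
        ((ContinuousLinearMap.proj j).comp (ContinuousLinearMap.snd ℝ (EE n) (Fin n → ℝ))).hasFDerivAt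
      have hc2 : HasFDerivAt (fun x : MM n => φ j i x.1)
          ((fderiv ℝ (φ j i) m.1).comp (ContinuousLinearMap.fst ℝ (EE n) (Fin n → ℝ))) m :=
        ((hφC j i m.1).hasFDerivAt).comp m hasFDerivAt_fst
      exact hc1.mul hc2
    exact h1.prodMk (hasFDerivAt_pi.2 h2)
  -- pairE with eqv
  have hpair : ∀ (i : Fin n) (a : EE n), pairE (eqv i) a = a.2 i := by
    intro i a
    simp [pairE, eqv, Pi.single_apply, ite_mul]
  -- components of fderiv X
  have hX1 : ∀ v : EE n, (fderiv ℝ X m.1 v).1 = 0 := by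
    intro v
    have h1 : fderiv ℝ (fun e : EE n => (X e).1) m.1 = 
        (ContinuousLinearMap.fst ℝ ℝ (Fin n → ℝ)).comp (fderiv ℝ X m.1) :=
      ((hXd m.1).hasFDerivAt.fst).fderiv
    have h2 : (fun e : EE n => (X e).1) = fun _ => c := funext hXc
    have h3 : fderiv ℝ (fun e : EE n => (X e).1) m.1 = 0 := by rw [h2]; exact fderiv_const_apply c
    have := h3.symm.trans h1
    calc (fderiv ℝ X m.1 v).1 
        = ((ContinuousLinearMap.fst ℝ ℝ (Fin n → ℝ)).comp (fderiv ℝ X m.1)) v := rfl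
      _ = (0 : EE n →L[ℝ] ℝ) v := by rw [← this]
      _ = 0 := rfl
  have hX2 : ∀ (j i : Fin n), (fderiv ℝ X m.1 (eqv i)).2 j = φ j i m.1 := by
    intro j i
    have h1 : fderiv ℝ (fun e : EE n => (X e).2 j) m.1 =
        ((ContinuousLinearMap.proj j).comp (ContinuousLinearMap.snd ℝ ℝ (Fin n → ℝ))).comp
          (fderiv ℝ X m.1) :=
      (((ContinuousLinearMap.proj j).comp
          (ContinuousLinearMap.snd ℝ ℝ (Fin n → ℝ))).hasFDerivAt.comp m.1
        (hXd m.1).hasFDerivAt).fderiv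
    simp only [hφdef, h1]
    rfl
  -- component derivative of α
  have hα2 : ∀ (i : Fin n) (v : EE n), (fderiv ℝ α m.1 v).2 i
      = fderiv ℝ (fun e : EE n => (α e).2 i) m.1 v := by
    intro i v
    have h1 : fderiv ℝ (fun e : EE n => (α e).2 i) m.1 =
        ((ContinuousLinearMap.proj i).comp (ContinuousLinearMap.snd ℝ ℝ (Fin n → ℝ))).comp
          (fderiv ℝ α m.1) :=
      (((ContinuousLinearMap.proj i).comp
          (ContinuousLinearMap.snd ℝ ℝ (Fin n → ℝ))).hasFDerivAt.comp m.1
        (hαd m.1).hasFDerivAt).fderiv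
    rw [h1]; rfl
  -- now compute
  unfold vbracket
  rw [hv.fderiv, hcl.fderiv]
  refine Prod.ext ?_ ?_
  · simp [vlift1, clift, Prod.mk_zero_zero]
  · funext i
    simp only [vlift1, clift, lieDer1, ContinuousLinearMap.prod_apply, Prod.snd_sub,
      ContinuousLinearMap.comp_apply, ContinuousLinearMap.pi_apply, Pi.sub_apply,
      ContinuousLinearMap.neg_apply, ContinuousLinearMap.sum_apply,
      ContinuousLinearMap.add_apply, ContinuousLinearMap.smul_apply,
      ContinuousLinearMap.coe_fst', ContinuousLinearMap.coe_snd',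
      ContinuousLinearMap.proj_apply, smul_eq_mul]
    simp only [Prod.mk_zero_zero, map_zero, mul_zero, zero_add]
    have hpe : (fun x => pairE (eqv i) (α x)) = fun x : EE n => (α x).2 i := by
      funext x; exact hpair i (α x)
    rw [hpe, ← hα2 i (X m.1)]
    have : pairE (fderiv ℝ X m.1 (eqv i)) (α m.1)
        = ∑ j, φ j i m.1 * (α m.1).2 j := by
      simp [pairE, hX1, hX2]
    rw [this, sub_neg_eq_add]
end
end

section
/- For f ∈ C^∞(E) and vertical X on E, the complete lift satisfies (fX)~ = f X̃ − F_X (df)^v, and the Lie derivative identity L_{fX} R = f L_X R − X ⊗ R(df) + R(X) ⊗ df holds for any (1,1) tensor R on E. -/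
noncomputable section

open scoped BigOperators

/-- For `f ∈ C^∞(E)` and vertical `X` on `E`:
`(fX)~ = f X̃ − F_X (df)^v`, and for any (1,1) tensor `R` on `E`:
`L_{fX} R = f L_X R − X ⊗ R(df) + R(X) ⊗ df`. -/
theorem statement11 {n : ℕ} (f : EE n → ℝ) (X : EE n → EE n)
    (hf : ContDiff ℝ (⊤ : ℕ∞) f) (hX : ContDiff ℝ (⊤ : ℕ∞) X) (hXv : ∀ e, (X e).1 = 0)
    (R : EE n → EE n → EE n)
    (hRl : ∀ e, IsLinearMap ℝ (R e))
    (hRs : ∀ u, ContDiff ℝ (⊤ : ℕ∞) (fun e => R e u)) :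
    (∀ m : MM n, clift (fun e => f e • X e) m
        = f m.1 • clift X m
          - FX X m • vlift1 (fun e => (fderiv ℝ f e edt, fun i => fderiv ℝ f e (eqv i))) m) ∧
    (∀ e u, lieDerT (fun x => f x • X x) R e u
        = f e • lieDerT X R e u - fderiv ℝ f e (R e u) • X e + fderiv ℝ f e u • R e (X e)) := by
  have hfd : ∀ e, DifferentiableAt ℝ f e := fun e => (hf.differentiable (by simp)).differentiableAt
  have hXd : ∀ e, DifferentiableAt ℝ X e := fun e => (hX.differentiable (by simp)).differentiableAt
  have hXj : ∀ (j : Fin n) (e : EE n), DifferentiableAt ℝ (fun e => (X e).2 j) e := by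
    intro j e
    exact differentiableAt_pi.mp (hXd e).snd j
  constructor
  · intro m
    have key : ∀ (i j : Fin n), fderiv ℝ (fun e => f e * (X e).2 j) m.1 (eqv i)
        = fderiv ℝ f m.1 (eqv i) * (X m.1).2 j
          + f m.1 * fderiv ℝ (fun e => (X e).2 j) m.1 (eqv i) := by
      intro i j
      rw [fderiv_fun_mul (hfd m.1) (hXj j m.1)]
      simp only [ContinuousLinearMap.add_apply, ContinuousLinearMap.smul_apply, smul_eq_mul]
      ring
    refine Prod.ext ?_ ?_
    · simp [clift, FX, vlift1, Prod.smul_def]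
    · funext i
      simp only [clift, FX, vlift1, key, Prod.smul_def, Prod.snd_sub, Pi.sub_apply,
        Pi.smul_apply, smul_eq_mul]
      have expand : ∀ j, m.2 j * (fderiv ℝ f m.1 (eqv i) * (X m.1).2 j
            + f m.1 * fderiv ℝ (fun e => (X e).2 j) m.1 (eqv i))
          = fderiv ℝ f m.1 (eqv i) * (m.2 j * (X m.1).2 j)
            + f m.1 * (m.2 j * fderiv ℝ (fun e => (X e).2 j) m.1 (eqv i)) := by
        intro j; ring
      simp only [expand, Finset.sum_add_distrib, ← Finset.mul_sum]
      ring
  · intro e u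
    have hRd : ∀ u, DifferentiableAt ℝ (fun y => R y u) e :=
      fun u => ((hRs u).differentiable (by simp)).differentiableAt
    have hsm : fderiv ℝ (fun x => f x • X x) e
        = f e • fderiv ℝ X e + (fderiv ℝ f e).smulRight (X e) := fderiv_fun_smul (hfd e) (hXd e)
    simp only [lieDerT, hsm, ContinuousLinearMap.add_apply, ContinuousLinearMap.smul_apply,
      ContinuousLinearMap.smulRight_apply, (fderiv ℝ (fun y => R y u) e).map_smul,
      (hRl e).map_add, (hRl e).map_smul]
    module
end
end

section
/- The adjoint (action on 1-forms) of the complete lift R̃ satisfies R̃(π*α) = π*(R(α)) for all 1-forms α on E, and R̃(dF_X) = dF_{R(X)} − (L_X R)^h for all vertical vector fields X on E, where (Q)^h = p_i Q^i_j dq^j + p_i Q^i_0 dt is the horizontal lift (a semi-basic 1-form on J¹τ*) of a (1,1) tensor Q with Q(dt)=0. -/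
noncomputable section

open scoped BigOperators

section Helpers
variable {n : ℕ}

lemma oletop : ((⊤ : ℕ∞) : WithTop ℕ∞) ≠ 0 := by simp

/-- projection to second-factor coordinate, as a CLM -/
def pc (i : Fin n) : EE n →L[ℝ] ℝ :=
  (ContinuousLinearMap.proj i).comp (ContinuousLinearMap.snd ℝ ℝ (Fin n → ℝ))

lemma diff_comp2 (F : EE n → EE n) (hF : ContDiff ℝ (⊤ : ℕ∞) F) (i : Fin n) :
    ContDiff ℝ (⊤ : ℕ∞) (fun e => (F e).2 i) := (pc i).contDiff.comp hF

lemma fderiv_comp2 (F : EE n → EE n) {e : EE n} (hF : DifferentiableAt ℝ F e) (i : Fin n)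
    (w : EE n) : fderiv ℝ (fun y => (F y).2 i) e w = (fderiv ℝ F e w).2 i := by
  have h : HasFDerivAt (fun y => (F y).2 i) ((pc i).comp (fderiv ℝ F e)) e :=
    ((pc i).hasFDerivAt).comp e hF.hasFDerivAt
  rw [h.fderiv]; rfl

lemma fderiv_comp1 (F : EE n → EE n) {e : EE n} (hF : DifferentiableAt ℝ F e)
    (w : EE n) : fderiv ℝ (fun y => (F y).1) e w = (fderiv ℝ F e w).1 := by
  have h : HasFDerivAt (fun y => (F y).1)
      ((ContinuousLinearMap.fst ℝ ℝ (Fin n → ℝ)).comp (fderiv ℝ F e)) e :=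
    ((ContinuousLinearMap.fst ℝ ℝ (Fin n → ℝ)).hasFDerivAt).comp e hF.hasFDerivAt
  rw [h.fderiv]; rfl

lemma fderiv_sum_mul {V : Type*} [NormedAddCommGroup V] [NormedSpace ℝ V] {ι : Type*}
    (s : Finset ι) (f g : ι → V → ℝ) (x : V)
    (hf : ∀ i ∈ s, DifferentiableAt ℝ (f i) x) (hg : ∀ i ∈ s, DifferentiableAt ℝ (g i) x)
    (w : V) :
    fderiv ℝ (fun y => ∑ i ∈ s, f i y * g i y) x w
      = ∑ i ∈ s, (fderiv ℝ (f i) x w * g i x + f i x * fderiv ℝ (g i) x w) := by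
  have h : HasFDerivAt (fun y => ∑ i ∈ s, f i y * g i y)
      (∑ i ∈ s, (f i x • fderiv ℝ (g i) x + g i x • fderiv ℝ (f i) x)) x := by
    apply HasFDerivAt.fun_sum
    intro i hi
    exact ((hf i hi).hasFDerivAt).mul ((hg i hi).hasFDerivAt)
  rw [h.fderiv]
  simp [ContinuousLinearMap.sum_apply, smul_eq_mul]
  exact Finset.sum_congr rfl fun i _ => by ring

lemma fderiv_pcoord (i : Fin n) (m v : MM n) :
    fderiv ℝ (fun m : MM n => m.2 i) m v = v.2 i := by
  have h : HasFDerivAt (fun m : MM n => m.2 i)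
      ((ContinuousLinearMap.proj i).comp (ContinuousLinearMap.snd ℝ (EE n) (Fin n → ℝ))) m :=
    ((ContinuousLinearMap.proj i).comp (ContinuousLinearMap.snd ℝ (EE n) (Fin n → ℝ))).hasFDerivAt
  rw [h.fderiv]; rfl

lemma fderiv_base (f : EE n → ℝ) {m : MM n} (hf : DifferentiableAt ℝ f m.1) (v : MM n) :
    fderiv ℝ (fun m : MM n => f m.1) m v = fderiv ℝ f m.1 v.1 := by
  have h : HasFDerivAt (fun m : MM n => f m.1)
      ((fderiv ℝ f m.1).comp (ContinuousLinearMap.fst ℝ (EE n) (Fin n → ℝ))) m :=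
    hf.hasFDerivAt.comp m (ContinuousLinearMap.fst ℝ (EE n) (Fin n → ℝ)).hasFDerivAt
  rw [h.fderiv]; rfl

lemma decompE (w : EE n) : w = w.1 • (edt : EE n) + ∑ k, w.2 k • eqv k := by
  have h2 : ∀ l, (w.1 • (edt : EE n) + ∑ k, w.2 k • eqv k).2 l = w.2 l := by
    intro l
    simp [edt, eqv, Prod.snd_sum, Finset.sum_apply, Pi.single_apply, mul_ite]
  refine Prod.ext ?_ (funext fun l => (h2 l).symm)
  simp [edt, eqv, Prod.fst_sum]

lemma clm_decomp (L : EE n →L[ℝ] ℝ) (w : EE n) :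
    L w = w.1 * L edt + ∑ k, w.2 k * L (eqv k) := by
  conv_lhs => rw [decompE w]
  simp [map_add, map_sum, map_smul, smul_eq_mul]

lemma Rexpand (R : EE n → EE n → EE n) (hRl : ∀ e, IsLinearMap ℝ (R e)) (e v : EE n) :
    R e v = v.1 • R e edt + ∑ j, v.2 j • R e (eqv j) := by
  let L := IsLinearMap.mk' (R e) (hRl e)
  have hL : ∀ w, R e w = L w := fun w => rfl
  conv_lhs => rw [decompE v]
  rw [hL, map_add, map_smul, map_sum]
  simp [hL]

lemma Rcomp2 (R : EE n → EE n → EE n) (hRl : ∀ e, IsLinearMap ℝ (R e)) (e v : EE n) (i : Fin n) :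
    (R e v).2 i = v.1 * Ri0 R i e + ∑ j, v.2 j * Rij R i j e := by
  rw [Rexpand R hRl e v]
  simp [Ri0, Rij, Prod.snd_sum, Finset.sum_apply]

lemma fderiv_FX_apply (X : EE n → EE n) (hX : ContDiff ℝ (⊤ : ℕ∞) X) (m v : MM n) :
    fderiv ℝ (FX X) m v
      = ∑ i, (v.2 i * (X m.1).2 i + m.2 i * fderiv ℝ (fun e => (X e).2 i) m.1 v.1) := by
  have hg : ∀ i : Fin n, DifferentiableAt ℝ (fun z : MM n => (X z.1).2 i) m :=
    fun i => (((diff_comp2 X hX i).differentiable oletop m.1).comp m differentiableAt_fst)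
  have h := fderiv_sum_mul (Finset.univ) (fun i (z : MM n) => z.2 i)
      (fun i (z : MM n) => (X z.1).2 i) m
      (fun i _ => (((ContinuousLinearMap.proj i).comp
        (ContinuousLinearMap.snd ℝ (EE n) (Fin n → ℝ))).differentiable m))
      (fun i _ => hg i) v
  rw [show (FX X) = (fun y : MM n => ∑ i, (fun z : MM n => z.2 i) y * (fun z : MM n => (X z.1).2 i) y) from rfl]
  rw [h]
  refine Finset.sum_congr rfl fun i _ => ?_
  rw [fderiv_pcoord i m v,
    fderiv_base (fun e => (X e).2 i) ((diff_comp2 X hX i).differentiable oletop m.1) v]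

lemma fderivX1 (X : EE n → EE n) (hX : ContDiff ℝ (⊤ : ℕ∞) X) (hXv : ∀ e, (X e).1 = 0)
    (e w : EE n) : (fderiv ℝ X e w).1 = 0 := by
  rw [← fderiv_comp1 X (hX.differentiable oletop e) w]
  have : (fun y : EE n => (X y).1) = fun _ => (0 : ℝ) := funext hXv
  rw [this, fderiv_fun_const]
  simp

lemma sum3_rot1 (f : Fin n → Fin n → Fin n → ℝ) :
    ∑ a, ∑ b, ∑ c, f a b c = ∑ c, ∑ a, ∑ b, f a b c := by
  trans ∑ a, ∑ c, ∑ b, f a b c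
  · exact Finset.sum_congr rfl fun a _ => Finset.sum_comm
  · exact Finset.sum_comm

lemma sum3_rot2 (f : Fin n → Fin n → Fin n → ℝ) :
    ∑ a, ∑ b, ∑ c, f a b c = ∑ b, ∑ c, ∑ a, f a b c := by
  trans ∑ b, ∑ a, ∑ c, f a b c
  · exact Finset.sum_comm
  · exact Finset.sum_congr rfl fun b _ => Finset.sum_comm

lemma cong2 {f g : Fin n → Fin n → ℝ} (h : ∀ a b, f a b = g a b) :
    ∑ a, ∑ b, f a b = ∑ a, ∑ b, g a b :=
  Finset.sum_congr rfl fun a _ => Finset.sum_congr rfl fun b _ => h a b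

lemma cong3 {f g : Fin n → Fin n → Fin n → ℝ} (h : ∀ a b c, f a b c = g a b c) :
    ∑ a, ∑ b, ∑ c, f a b c = ∑ a, ∑ b, ∑ c, g a b c :=
  Finset.sum_congr rfl fun a _ => Finset.sum_congr rfl fun b _ =>
    Finset.sum_congr rfl fun c _ => h a b c

lemma keyalg (p x uP w : Fin n → ℝ) (w0 : ℝ) (r dx : Fin n → Fin n → ℝ)
    (a dxt : Fin n → ℝ) (dr : Fin n → Fin n → Fin n → ℝ) (drt da : Fin n → Fin n → ℝ) :
    ∑ j, (((∑ i, r i j * uP i)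
        + (∑ k, (∑ i, p i * (dr i j k - dr i k j)) * w k)
        + (∑ i, p i * (drt i j - da i j)) * w0) * x j
      + p j * (∑ l, ((∑ k, r l k * w k) + a l * w0) * dx j l))
    = (∑ i, (uP i * (∑ j, x j * r i j)
        + p i * (∑ j, ((w0 * dxt j + ∑ k, w k * dx j k) * r i j
                     + x j * (w0 * drt i j + ∑ k, w k * dr i j k)))))
      - (w0 * (∑ i, p i * ((∑ l, x l * da i l) - (∑ l, a l * dx i l) + (∑ j, dxt j * r i j)))
        + ∑ k, w k * (∑ i, p i * ((∑ l, x l * dr i k l) - (∑ l, r l k * dx i l) + (∑ j, dx j k * r i j)))) := by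
  have g1 : (∑ j, ∑ i, r i j * uP i * x j) = ∑ i, ∑ j, uP i * x j * r i j :=
    (Finset.sum_comm).trans (cong2 fun i j => by ring)
  have g2a : (∑ j, ∑ k, ∑ i, p i * dr i j k * w k * x j)
      = ∑ i, ∑ j, ∑ k, p i * x j * w k * dr i j k :=
    (sum3_rot1 _).trans (cong3 fun i j k => by ring)
  have g2b : (∑ j, ∑ k, ∑ i, p i * dr i k j * w k * x j)
      = ∑ k, ∑ i, ∑ j, w k * p i * x j * dr i k j :=
    (sum3_rot2 _).trans (cong3 fun k i j => by ring)
  have g3a : (∑ j, ∑ i, p i * drt i j * w0 * x j) = ∑ i, ∑ j, w0 * p i * x j * drt i j :=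
    (Finset.sum_comm).trans (cong2 fun i j => by ring)
  have g3b : (∑ j, ∑ i, w0 * p i * da i j * x j) = ∑ i, ∑ j, w0 * p i * x j * da i j :=
    (Finset.sum_comm).trans (cong2 fun i j => by ring)
  have g4 : (∑ j, ∑ l, ∑ k, p j * r l k * w k * dx j l)
      = ∑ k, ∑ j, ∑ l, w k * p j * r l k * dx j l :=
    (sum3_rot1 _).trans (cong3 fun k j l => by ring)
  have g5 : (∑ j, ∑ l, p j * a l * w0 * dx j l) = ∑ j, ∑ l, w0 * p j * a l * dx j l :=
    cong2 fun j l => by ring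
  have g6 : (∑ i, ∑ j, p i * w0 * dxt j * r i j) = ∑ i, ∑ j, w0 * p i * dxt j * r i j :=
    cong2 fun i j => by ring
  have g7 : (∑ i, ∑ j, ∑ k, p i * w k * dx j k * r i j)
      = ∑ k, ∑ i, ∑ j, w k * p i * dx j k * r i j :=
    (sum3_rot1 _).trans (cong3 fun k i j => by ring)
  simp only [Finset.sum_add_distrib, Finset.sum_sub_distrib, add_mul, sub_mul, mul_add, mul_sub,
    Finset.sum_mul, Finset.mul_sum]
  ring_nf
  rw [g1, g2a, g2b, g3a, g3b, g4, g7]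
  ring

end Helpers

/-- The adjoint action (on 1-forms) of the complete lift `R̃`
satisfies `R̃(π*α) = π*(R(α))` for all 1-forms `α` on `E`, and
`R̃(dF_X) = dF_{R(X)} − (L_X R)^h` for all vertical `X` on `E`, where `(·)^h`
is the horizontal lift of a (1,1) tensor.  (The adjoint action of a (1,1) tensor
`T` on a 1-form `σ` is characterized by `⟨u, T(σ)⟩ = ⟨T(u), σ⟩`.) -/
theorem statement13 {n : ℕ} (R : EE n → EE n → EE n)
    (hRl : ∀ e, IsLinearMap ℝ (R e)) (hRv : ∀ e u, (R e u).1 = 0)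
    (hRs : ∀ u, ContDiff ℝ (⊤ : ℕ∞) (fun e => R e u))
    (α X : EE n → EE n) (hα : ContDiff ℝ (⊤ : ℕ∞) α)
    (hX : ContDiff ℝ (⊤ : ℕ∞) X) (hXv : ∀ e, (X e).1 = 0) :
    (∀ m u : MM n, pairE (tlift R m u).1 (α m.1) = pairE u.1 (adjS R α m.1)) ∧
    (∀ m u : MM n, fderiv ℝ (FX X) m (tlift R m u)
        = fderiv ℝ (FX (fun e => R e (X e))) m u - pairM u (hliftC (lieDerT X R) m)) := by
  constructor
  · intro m u
    simp [pairE, tlift, adjS, hRv, Rij, Ri0, add_mul, Finset.sum_mul, Finset.sum_add_distrib, Finset.mul_sum]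
    rw [add_comm, Finset.sum_comm]
    congr 1
    · exact Finset.sum_congr rfl fun i _ => by ring
    · exact Finset.sum_congr rfl fun i _ => by
        exact Finset.sum_congr rfl fun j _ => by ring
  · intro m u
    have hXd : Differentiable ℝ X := hX.differentiable oletop
    have hRd : ∀ v : EE n, Differentiable ℝ (fun e => R e v) :=
      fun v => (hRs v).differentiable oletop
    have hRX : ContDiff ℝ (⊤ : ℕ∞) (fun e => R e (X e)) := by
      have hfe : (fun e => R e (X e))
          = fun e => ((X e).1 • R e edt + ∑ j, (X e).2 j • R e (eqv j)) :=
        funext fun e => Rexpand R hRl e (X e)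
      rw [hfe]
      refine ContDiff.add (ContDiff.fun_smul ?_ (hRs edt))
        (ContDiff.sum fun j _ => ContDiff.fun_smul ?_ (hRs (eqv j)))
      · exact (ContinuousLinearMap.fst ℝ ℝ (Fin n → ℝ)).contDiff.comp hX
      · exact (pc j).contDiff.comp hX
    -- rewrite derivative of X-components in the tlift direction
    have hA : ∀ i : Fin n, fderiv ℝ (fun y => (X y).2 i) m.1 (tlift R m u).1
        = ∑ l, ((∑ k, Rij R l k m.1 * u.1.2 k) + Ri0 R l m.1 * u.1.1)
            * fderiv ℝ (fun y => (X y).2 i) m.1 (eqv l) := by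
      intro i
      rw [clm_decomp (fderiv ℝ (fun y => (X y).2 i) m.1) (tlift R m u).1]
      simp only [tlift]
      rw [zero_mul, zero_add]
    -- value of (R (X)) components
    have hB : ∀ i : Fin n, (R m.1 (X m.1)).2 i = ∑ j, (X m.1).2 j * Rij R i j m.1 := by
      intro i
      rw [Rcomp2 R hRl m.1 (X m.1) i, hXv m.1, zero_mul, zero_add]
    -- derivative of (R (X)) components
    have hC : ∀ i : Fin n, fderiv ℝ (fun y => (R y (X y)).2 i) m.1 u.1
        = ∑ j, ((u.1.1 * fderiv ℝ (fun y => (X y).2 j) m.1 edt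
              + ∑ k, u.1.2 k * fderiv ℝ (fun y => (X y).2 j) m.1 (eqv k)) * Rij R i j m.1
            + (X m.1).2 j * (u.1.1 * fderiv ℝ (Rij R i j) m.1 edt
              + ∑ k, u.1.2 k * fderiv ℝ (Rij R i j) m.1 (eqv k))) := by
      intro i
      have hfe : (fun y => (R y (X y)).2 i)
          = fun y => ∑ j, (fun z => (X z).2 j) y * (fun z => Rij R i j z) y := by
        funext y
        rw [Rcomp2 R hRl y (X y) i, hXv y, zero_mul, zero_add]
      rw [hfe, fderiv_sum_mul Finset.univ (fun j (z : EE n) => (X z).2 j)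
        (fun j z => Rij R i j z) m.1
        (fun j _ => (diff_comp2 X hX j).differentiable oletop m.1)
        (fun j _ => (diff_comp2 (fun e => R e (eqv j)) (hRs (eqv j)) i).differentiable oletop m.1)
        u.1]
      refine Finset.sum_congr rfl fun j _ => ?_
      rw [clm_decomp (fderiv ℝ (fun z : EE n => (X z).2 j) m.1) u.1,
        clm_decomp (fderiv ℝ (fun z : EE n => Rij R i j z) m.1) u.1]
    -- components of the Lie derivative tensor, at edt
    have hlie0 : ∀ i : Fin n, (lieDerT X R m.1 edt).2 i
        = (∑ l, (X m.1).2 l * fderiv ℝ (Ri0 R i) m.1 (eqv l))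
          - (∑ l, Ri0 R l m.1 * fderiv ℝ (fun y => (X y).2 i) m.1 (eqv l))
          + ∑ j, fderiv ℝ (fun y => (X y).2 j) m.1 edt * Rij R i j m.1 := by
      intro i
      simp only [lieDerT, Prod.snd_sub, Prod.snd_add, Pi.sub_apply, Pi.add_apply]
      congr 1
      · congr 1
        · -- first term
          rw [← fderiv_comp2 (fun y => R y edt) (hRd edt m.1) i (X m.1)]
          rw [show (fun y => (R y edt).2 i) = Ri0 R i from rfl]
          rw [clm_decomp (fderiv ℝ (Ri0 R i) m.1) (X m.1), hXv m.1, zero_mul, zero_add]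
        · -- second term
          rw [← fderiv_comp2 X (hXd m.1) i (R m.1 edt)]
          rw [clm_decomp (fderiv ℝ (fun y => (X y).2 i) m.1) (R m.1 edt), hRv m.1 edt,
            zero_mul, zero_add]
          exact Finset.sum_congr rfl fun l _ => by rfl
      · -- third term
        rw [Rcomp2 R hRl m.1 (fderiv ℝ X m.1 edt) i, fderivX1 X hX hXv m.1 edt,
          zero_mul, zero_add]
        exact Finset.sum_congr rfl fun j _ => by
          rw [← fderiv_comp2 X (hXd m.1) j edt]
    -- components of the Lie derivative tensor, at eqv k
    have hliek : ∀ (k i : Fin n), (lieDerT X R m.1 (eqv k)).2 i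
        = (∑ l, (X m.1).2 l * fderiv ℝ (Rij R i k) m.1 (eqv l))
          - (∑ l, Rij R l k m.1 * fderiv ℝ (fun y => (X y).2 i) m.1 (eqv l))
          + ∑ j, fderiv ℝ (fun y => (X y).2 j) m.1 (eqv k) * Rij R i j m.1 := by
      intro k i
      simp only [lieDerT, Prod.snd_sub, Prod.snd_add, Pi.sub_apply, Pi.add_apply]
      congr 1
      · congr 1
        · rw [← fderiv_comp2 (fun y => R y (eqv k)) (hRd (eqv k) m.1) i (X m.1)]
          rw [show (fun y => (R y (eqv k)).2 i) = Rij R i k from rfl]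
          rw [clm_decomp (fderiv ℝ (Rij R i k) m.1) (X m.1), hXv m.1, zero_mul, zero_add]
        · rw [← fderiv_comp2 X (hXd m.1) i (R m.1 (eqv k))]
          rw [clm_decomp (fderiv ℝ (fun y => (X y).2 i) m.1) (R m.1 (eqv k)), hRv m.1 (eqv k),
            zero_mul, zero_add]
          exact Finset.sum_congr rfl fun l _ => by rfl
      · rw [Rcomp2 R hRl m.1 (fderiv ℝ X m.1 (eqv k)) i, fderivX1 X hX hXv m.1 (eqv k),
          zero_mul, zero_add]
        exact Finset.sum_congr rfl fun j _ => by
          rw [← fderiv_comp2 X (hXd m.1) j (eqv k)]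
    rw [fderiv_FX_apply X hX m (tlift R m u), fderiv_FX_apply (fun e => R e (X e)) hRX m u]
    simp only [hA, hB, hC]
    simp only [pairM, pairE, hliftC, hlie0, hliek, Pi.zero_apply, mul_zero,
      Finset.sum_const_zero, add_zero]
    simp only [tlift]
    exact keyalg m.2 (fun j => (X m.1).2 j) u.2 u.1.2 u.1.1
      (fun i j => Rij R i j m.1)
      (fun j l => fderiv ℝ (fun y => (X y).2 j) m.1 (eqv l))
      (fun i => Ri0 R i m.1)
      (fun j => fderiv ℝ (fun y => (X y).2 j) m.1 edt)
      (fun i j k => fderiv ℝ (Rij R i j) m.1 (eqv k))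
      (fun i j => fderiv ℝ (Rij R i j) m.1 edt)
      (fun i l => fderiv ℝ (Ri0 R i) m.1 (eqv l))
end
end

section
/- The square of the complete lift satisfies R̃²(α^v) = (R²(α))^v for 1-forms α on E, and R̃²(X̃) = (R²(X))~ + (L_X R²)^v + (i_X N_R)^v for X vertical or with ⟨X,dt⟩=1, where N_R is the Nijenhuis torsion of R and (i_X N_R)(Y) = N_R(X,Y). -/
noncomputable section

open scoped BigOperators

section Aux
variable {n : ℕ}

lemma vdecomp (v : EE n) : v = v.1 • (edt : EE n) + ∑ k, v.2 k • eqv k := by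
  refine Prod.ext ?_ ?_
  · simp [edt, eqv, Prod.fst_sum]
  · funext l
    simp [edt, eqv, Prod.snd_sum, Finset.sum_apply, Pi.single_apply]

lemma Rapp (R : EE n → EE n → EE n) (hRl : ∀ e, IsLinearMap ℝ (R e))
    (hRv : ∀ e u, (R e u).1 = 0) (e v : EE n) :
    R e v = (0, fun i => v.1 * Ri0 R i e + ∑ j, v.2 j * Rij R i j e) := by
  have hL : ∀ w, R e w = IsLinearMap.mk' (R e) (hRl e) w := fun _ => rfl
  have key : R e v = v.1 • R e edt + ∑ k, v.2 k • R e (eqv k) := by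
    conv_lhs => rw [vdecomp v, hL]
    rw [map_add, map_smul, map_sum]
    simp only [← hL]
    exact congrArg _ (Finset.sum_congr rfl fun k _ => (hRl e).map_smul _ _)
  rw [key]
  refine Prod.ext ?_ ?_
  · simp only [Prod.fst_add, Prod.smul_fst, Prod.fst_sum, hRv]
    simp
  · funext i
    simp only [Prod.snd_add, Prod.smul_snd, Prod.snd_sum, Pi.add_apply,
      Pi.smul_apply, Finset.sum_apply, smul_eq_mul]
    rfl

lemma smooth_Rij (R : EE n → EE n → EE n) (hRs : ∀ u, ContDiff ℝ (⊤ : ℕ∞) (fun e => R e u))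
    (i j : Fin n) : ContDiff ℝ (⊤ : ℕ∞) (Rij R i j) :=
  contDiff_pi.mp (hRs (eqv j)).snd i

lemma smooth_Ri0 (R : EE n → EE n → EE n) (hRs : ∀ u, ContDiff ℝ (⊤ : ℕ∞) (fun e => R e u))
    (i : Fin n) : ContDiff ℝ (⊤ : ℕ∞) (Ri0 R i) :=
  contDiff_pi.mp (hRs edt).snd i

lemma fderiv_snd_apply (F : EE n → EE n) (e : EE n) (hF : DifferentiableAt ℝ F e)
    (v : EE n) (i : Fin n) :
    (fderiv ℝ F e v).2 i = fderiv ℝ (fun y => (F y).2 i) e v := by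
  have h1 : (fun y => (F y).2 i)
      = ((ContinuousLinearMap.proj i).comp (ContinuousLinearMap.snd ℝ ℝ (Fin n → ℝ))) ∘ F := rfl
  rw [h1, fderiv_comp e (ContinuousLinearMap.differentiableAt _) hF,
    ContinuousLinearMap.fderiv]
  rfl

lemma fderiv_fst_apply (F : EE n → EE n) (e : EE n) (hF : DifferentiableAt ℝ F e)
    (v : EE n) :
    (fderiv ℝ F e v).1 = fderiv ℝ (fun y => (F y).1) e v := by
  have h1 : (fun y => (F y).1)
      = (ContinuousLinearMap.fst ℝ ℝ (Fin n → ℝ)) ∘ F := rfl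
  rw [h1, fderiv_comp e (ContinuousLinearMap.differentiableAt _) hF,
    ContinuousLinearMap.fderiv]
  rfl

lemma fderiv_dir (f : EE n → ℝ) (e v : EE n) :
    fderiv ℝ f e v = v.1 * fderiv ℝ f e edt + ∑ k, v.2 k * fderiv ℝ f e (eqv k) := by
  conv_lhs => rw [vdecomp v]
  rw [map_add, map_smul, map_sum]
  simp [smul_eq_mul]

lemma fderiv_sum_mul_s16 {n : ℕ} (f h : Fin n → EE n → ℝ) (e v : EE n)
    (hf : ∀ l, DifferentiableAt ℝ (f l) e) (hh : ∀ l, DifferentiableAt ℝ (h l) e) :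
    fderiv ℝ (fun y => ∑ l, f l y * h l y) e v
      = ∑ l, (fderiv ℝ (f l) e v * h l e + f l e * fderiv ℝ (h l) e v) := by
  have H : HasFDerivAt (fun y => ∑ l, f l y * h l y)
      (∑ l, (f l e • fderiv ℝ (h l) e + h l e • fderiv ℝ (f l) e)) e :=
    HasFDerivAt.fun_sum fun l _ => ((hf l).hasFDerivAt.mul (hh l).hasFDerivAt)
  rw [H.fderiv]
  simp only [ContinuousLinearMap.coe_sum', Finset.sum_apply, ContinuousLinearMap.add_apply,
    ContinuousLinearMap.coe_smul', Pi.smul_apply, smul_eq_mul]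
  exact Finset.sum_congr rfl fun l _ => by ring

lemma fderiv_cmul_addsum {n : ℕ} (c : ℝ) (g : EE n → ℝ) (f h : Fin n → EE n → ℝ) (e v : EE n)
    (hg : DifferentiableAt ℝ g e) (hf : ∀ l, DifferentiableAt ℝ (f l) e)
    (hh : ∀ l, DifferentiableAt ℝ (h l) e) :
    fderiv ℝ (fun y => c * g y + ∑ l, f l y * h l y) e v
      = c * fderiv ℝ g e v + ∑ l, (fderiv ℝ (f l) e v * h l e + f l e * fderiv ℝ (h l) e v) := by
  rw [fderiv_fun_add ((hg.const_mul c)) (show DifferentiableAt ℝ (fun y => ∑ l, f l y * h l y) e from DifferentiableAt.fun_sum fun l _ => (hf l).mul (hh l))]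
  rw [ContinuousLinearMap.add_apply, fderiv_const_mul hg c, fderiv_sum_mul_s16 f h e v hf hh]
  simp [smul_eq_mul]

end Aux



lemma sum3_rot {n : ℕ} (f : Fin n → Fin n → Fin n → ℝ) :
    ∑ a, ∑ b, ∑ i, f a b i = ∑ i, ∑ a, ∑ b, f a b i :=
  (Finset.sum_congr rfl fun a _ => Finset.sum_comm).trans Finset.sum_comm

lemma sum3_rev {n : ℕ} (f : Fin n → Fin n → Fin n → ℝ) :
    ∑ a, ∑ b, ∑ i, f a b i = ∑ i, ∑ b, ∑ a, f a b i :=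
  (sum3_rot f).trans (Finset.sum_congr rfl fun i _ => Finset.sum_comm)

lemma bigsum {n : ℕ} (j : Fin n) (c : ℝ) (p xx ss : Fin n → ℝ)
    (rr Dt Ds DX : Fin n → Fin n → ℝ) (Dr : Fin n → Fin n → Fin n → ℝ) :
    ∑ a, rr a j *
        (∑ b, rr b a * -∑ i, p i * DX i b
          + ∑ k, (∑ i, p i * (Dr i a k - Dr i k a)) * xx k
          + (∑ i, p i * (Dt i a - Ds i a)) * c)
      + ∑ k, (∑ i, p i * (Dr i j k - Dr i k j)) * (∑ l, rr k l * xx l + ss k * c)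
      + (∑ i, p i * (Dt i j - Ds i j)) * 0
    = -∑ i, p i * ∑ k, ((c * Ds k j + ∑ l, (DX l j * rr k l + xx l * Dr k l j)) * rr i k
          + (c * ss k + ∑ l, xx l * rr k l) * Dr i k j)
      + ∑ i, p i *
          (∑ k, ((c * Dt k j + ∑ l, xx l * Dr k j l) * rr i k
              + rr k j * (c * Dt i k + ∑ l, xx l * Dr i k l))
            - ∑ k, (∑ l, rr l j * rr k l) * DX i k
            + ∑ k, (∑ l, DX l j * rr k l) * rr i k)
      + ∑ i, p i *
          (∑ k, (c * ss k + ∑ l, xx l * rr k l) * Dr i j k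
            - (c * ∑ k, rr k j * Ds i k + ∑ k, xx k * ∑ l, rr l j * Dr i k l)
            + ∑ k, (c * Ds k j + ∑ l, xx l * Dr k l j) * rr i k
            - ∑ k, (c * Dt k j + ∑ l, xx l * Dr k j l) * rr i k) := by
  simp only [mul_zero, add_zero, mul_add, mul_sub, sub_mul, add_mul, mul_neg, neg_mul,
    Finset.sum_add_distrib, Finset.sum_sub_distrib, Finset.mul_sum, Finset.sum_mul,
    neg_add_rev, neg_sub, neg_neg, mul_assoc]
  ring_nf
  have e1 : (∑ x : Fin n, ∑ x_1 : Fin n, -∑ x_2 : Fin n, rr x j * rr x_1 x * p x_2 * DX x_2 x_1)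
      = -∑ x : Fin n, ∑ x_1 : Fin n, ∑ x_2 : Fin n, p x * DX x x_1 * rr x_2 j * rr x_1 x_2 := by
    simp only [Finset.sum_neg_distrib]
    rw [sum3_rev]
    exact congrArg _ (Finset.sum_congr rfl fun _ _ => Finset.sum_congr rfl fun _ _ =>
      Finset.sum_congr rfl fun _ _ => by ring)
  have e2 : (∑ x : Fin n, ∑ x_1 : Fin n, ∑ x_2 : Fin n, rr x j * p x_2 * Dr x_2 x x_1 * xx x_1)
      = ∑ x : Fin n, ∑ x_1 : Fin n, ∑ x_2 : Fin n, p x * rr x_1 j * xx x_2 * Dr x x_1 x_2 := by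
    rw [sum3_rot]
    exact Finset.sum_congr rfl fun _ _ => Finset.sum_congr rfl fun _ _ =>
      Finset.sum_congr rfl fun _ _ => by ring
  have e3 : (∑ x : Fin n, ∑ x_1 : Fin n, ∑ x_2 : Fin n, rr x j * p x_2 * Dr x_2 x_1 x * xx x_1)
      = ∑ x : Fin n, ∑ x_1 : Fin n, ∑ x_2 : Fin n, p x * xx x_1 * rr x_2 j * Dr x x_1 x_2 := by
    rw [sum3_rev]
    exact Finset.sum_congr rfl fun _ _ => Finset.sum_congr rfl fun _ _ =>
      Finset.sum_congr rfl fun _ _ => by ring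
  have e4 : (∑ x : Fin n, ∑ x_1 : Fin n, rr x j * p x_1 * Dt x_1 x * c)
      = ∑ x : Fin n, ∑ x_1 : Fin n, c * p x * rr x_1 j * Dt x x_1 := by
    rw [Finset.sum_comm]
    exact Finset.sum_congr rfl fun _ _ => Finset.sum_congr rfl fun _ _ => by ring
  have e5 : (∑ x : Fin n, ∑ x_1 : Fin n, c * rr x j * p x_1 * Ds x_1 x)
      = ∑ x : Fin n, ∑ x_1 : Fin n, p x * c * rr x_1 j * Ds x x_1 := by
    rw [Finset.sum_comm]
    exact Finset.sum_congr rfl fun _ _ => Finset.sum_congr rfl fun _ _ => by ring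
  have e6 : (∑ x : Fin n, ∑ x_1 : Fin n, ∑ x_2 : Fin n, p x_2 * Dr x_2 j x * rr x x_1 * xx x_1)
      = ∑ x : Fin n, ∑ x_1 : Fin n, ∑ x_2 : Fin n, p x * Dr x j x_1 * xx x_2 * rr x_1 x_2 := by
    rw [sum3_rot]
    exact Finset.sum_congr rfl fun _ _ => Finset.sum_congr rfl fun _ _ =>
      Finset.sum_congr rfl fun _ _ => by ring
  have e7 : (∑ x : Fin n, ∑ x_1 : Fin n, ∑ x_2 : Fin n, p x_2 * Dr x_2 x j * rr x x_1 * xx x_1)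
      = ∑ x : Fin n, ∑ x_1 : Fin n, ∑ x_2 : Fin n, p x * Dr x x_1 j * xx x_2 * rr x_1 x_2 := by
    rw [sum3_rot]
    exact Finset.sum_congr rfl fun _ _ => Finset.sum_congr rfl fun _ _ =>
      Finset.sum_congr rfl fun _ _ => by ring
  have e8 : (∑ x : Fin n, ∑ x_1 : Fin n, c * p x_1 * Dr x_1 j x * ss x)
      = ∑ x : Fin n, ∑ x_1 : Fin n, p x * c * ss x_1 * Dr x j x_1 := by
    rw [Finset.sum_comm]
    exact Finset.sum_congr rfl fun _ _ => Finset.sum_congr rfl fun _ _ => by ring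
  have e9 : (∑ x : Fin n, ∑ x_1 : Fin n, c * p x_1 * Dr x_1 x j * ss x)
      = ∑ x : Fin n, ∑ x_1 : Fin n, p x * c * ss x_1 * Dr x x_1 j := by
    rw [Finset.sum_comm]
    exact Finset.sum_congr rfl fun _ _ => Finset.sum_congr rfl fun _ _ => by ring
  rw [e1, e2, e3, e4, e5, e6, e7, e8, e9]
  ring

/-- The square of the complete lift satisfies
`R̃²(α^v) = (R²(α))^v` for 1-forms `α` on `E`, and
`R̃²(X̃) = (R²(X))~ + (L_X R²)^v + (i_X N_R)^v` for `X` vertical or with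
`⟨X,dt⟩ = 1`, where `N_R` is the Nijenhuis torsion of `R`. -/
theorem statement16 {n : ℕ} (R : EE n → EE n → EE n)
    (hRl : ∀ e, IsLinearMap ℝ (R e)) (hRv : ∀ e u, (R e u).1 = 0)
    (hRs : ∀ u, ContDiff ℝ (⊤ : ℕ∞) (fun e => R e u)) :
    (∀ α : EE n → EE n, ContDiff ℝ (⊤ : ℕ∞) α →
      ∀ m : MM n, tlift R m (tlift R m (vlift1 α m))
        = vlift1 (adjS (fun e u => R e (R e u)) α) m) ∧
    (∀ X : EE n → EE n, ContDiff ℝ (⊤ : ℕ∞) X →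
      ((∀ e, (X e).1 = 0) ∨ (∀ e, (X e).1 = 1)) →
      ∀ m : MM n, tlift R m (tlift R m (clift X m))
        = clift (fun e => R e (R e (X e))) m
          + vlift11 (lieDerT X (fun e u => R e (R e u))) m
          + vlift11 (fun e u => nijT R e (X e) u) m) := by
  classical
  have hrD : ∀ (i j : Fin n) (e : EE n), DifferentiableAt ℝ (Rij R i j) e := fun i j e =>
    ((smooth_Rij R hRs i j).differentiable (by simp)).differentiableAt
  have hsD : ∀ (i : Fin n) (e : EE n), DifferentiableAt ℝ (Ri0 R i) e := fun i e =>
    ((smooth_Ri0 R hRs i).differentiable (by simp)).differentiableAt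
  constructor
  · intro α hα m
    refine Prod.ext ?_ ?_
    · simp only [tlift, vlift1, adjS, Pi.zero_apply, mul_zero, zero_mul, add_zero,
        Finset.sum_const_zero]
      exact Prod.ext rfl (funext fun _ => rfl)
    · funext j
      simp only [tlift, vlift1, adjS, Pi.zero_apply, mul_zero, zero_mul, add_zero,
        Finset.sum_const_zero, Prod.fst_zero, Prod.snd_zero]
      have hR2 : ∀ i, (R m.1 (R m.1 (eqv j))).2 i = ∑ k, Rij R k j m.1 * Rij R i k m.1 := by
        intro i
        rw [Rapp R hRl hRv m.1 (R m.1 (eqv j))]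
        simp [hRv]
        rfl
      rw [pairE]
      simp only [hRv, zero_mul, zero_add, hR2]
      simp only [Finset.mul_sum]
      rw [Finset.sum_comm]
      refine Finset.sum_congr rfl fun i _ => ?_
      rw [Finset.sum_mul]
      refine Finset.sum_congr rfl fun k _ => ?_
      ring
  · intro X hX hX01 m
    obtain ⟨e, p⟩ := m
    obtain ⟨c, hc⟩ : ∃ c : ℝ, ∀ y, (X y).1 = c := by
      rcases hX01 with h | h
      · exact ⟨0, h⟩
      · exact ⟨1, h⟩
    have hXc : ∀ k, ContDiff ℝ (⊤ : ℕ∞) (fun y => (X y).2 k) := fun k =>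
      contDiff_pi.mp hX.snd k
    have hXD : ∀ (k : Fin n) (y : EE n), DifferentiableAt ℝ (fun y' => (X y').2 k) y :=
      fun k y => ((hXc k).differentiable (by simp)).differentiableAt
    have hYk : ∀ (k : Fin n) (y : EE n),
        (R y (X y)).2 k = c * Ri0 R k y + ∑ l, (X y).2 l * Rij R k l y := by
      intro k y
      rw [Rapp R hRl hRv y (X y)]
      simp [hc y]
    have hZi : ∀ (i : Fin n) (y : EE n),
        (R y (R y (X y))).2 i = ∑ k, (R y (X y)).2 k * Rij R i k y := by
      intro i y
      rw [Rapp R hRl hRv y (R y (X y))]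
      simp [hRv]
    refine Prod.ext ?_ ?_
    · -- first components
      simp only [tlift, clift, vlift11, Prod.fst_add, Prod.mk_add_mk]
      refine Prod.ext ?_ ?_
      · simp [hRv, Prod.fst_add]
      · funext i
        simp only [Pi.add_apply, Prod.snd_add]
        rw [hZi i e]
        simp only [hYk]
        simp only [Pi.zero_apply, mul_zero, add_zero, hc e]
        have hsw : ∀ x : Fin n, ∑ x1, Rij R x x1 e * (X e).2 x1
            = ∑ l, (X e).2 l * Rij R x l e :=
          fun x => Finset.sum_congr rfl fun _ _ => mul_comm _ _
        simp only [hsw]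
        exact Finset.sum_congr rfl fun k _ => by ring
    · funext j
      simp only [tlift, clift, vlift11, lieDerT, nijT, Prod.snd_add, Pi.add_apply,
        Prod.fst_add, Prod.snd_sub, Prod.fst_sub, Pi.sub_apply]
      have hXdiff : DifferentiableAt ℝ X e := (hX.differentiable (by simp)).differentiableAt
      have hRXe : DifferentiableAt ℝ (fun y => R y (X e)) e :=
        ((hRs (X e)).differentiable (by simp)).differentiableAt
      have hRej : DifferentiableAt ℝ (fun y => R y (eqv j)) e :=
        ((hRs (eqv j)).differentiable (by simp)).differentiableAt
      have hdX0 : ∀ v : EE n, fderiv ℝ (fun y => (X y).1) e v = 0 := by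
        intro v
        rw [show (fun y => (X y).1) = fun _ : EE n => c from funext hc]
        simp
      have hYdiff : ∀ (k : Fin n) (y : EE n), DifferentiableAt ℝ (fun y' => (R y' (X y')).2 k) y := by
        intro k y
        rw [show (fun y' => (R y' (X y')).2 k)
            = fun y' => c * Ri0 R k y' + ∑ l, (X y').2 l * Rij R k l y' from funext (hYk k)]
        exact ((hsD k y).const_mul c).add
          (DifferentiableAt.fun_sum fun l _ => (hXD l y).mul (hrD k l y))
      have hdY : ∀ (k : Fin n) (v : EE n), fderiv ℝ (fun y => (R y (X y)).2 k) e v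
          = c * fderiv ℝ (Ri0 R k) e v
            + ∑ l, (fderiv ℝ (fun y => (X y).2 l) e v * Rij R k l e
              + (X e).2 l * fderiv ℝ (Rij R k l) e v) := by
        intro k v
        rw [show (fun y => (R y (X y)).2 k)
            = fun y => c * Ri0 R k y + ∑ l, (X y).2 l * Rij R k l y from funext (hYk k)]
        exact fderiv_cmul_addsum c _ _ _ e v (hsD k e) (fun l => hXD l e) (fun l => hrD k l e)
      have hdZ : ∀ i : Fin n, fderiv ℝ (fun y => (R y (R y (X y))).2 i) e (eqv j)
          = ∑ k, (fderiv ℝ (fun y => (R y (X y)).2 k) e (eqv j) * Rij R i k e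
              + (R e (X e)).2 k * fderiv ℝ (Rij R i k) e (eqv j)) := by
        intro i
        rw [show (fun y => (R y (R y (X y))).2 i)
            = fun y => ∑ k, (R y (X y)).2 k * Rij R i k y from funext (hZi i)]
        exact fderiv_sum_mul_s16 _ _ e _ (fun k => hYdiff k e) (fun k => hrD i k e)
      have hS2c : ∀ (i : Fin n) (y : EE n),
          (R y (R y (eqv j))).2 i = ∑ k, Rij R k j y * Rij R i k y := by
        intro i y
        rw [Rapp R hRl hRv y (R y (eqv j))]
        simp only [hRv, zero_mul, zero_add]
        rfl
      have hS2diff : DifferentiableAt ℝ (fun y => R y (R y (eqv j))) e := by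
        rw [show (fun y => R y (R y (eqv j)))
            = fun y => ((0:ℝ), fun i => ∑ k, Rij R k j y * Rij R i k y) from funext fun y => by
          rw [Rapp R hRl hRv y (R y (eqv j))]
          refine Prod.ext rfl ?_
          funext i
          simp only [hRv, zero_mul, zero_add]
          rfl]
        exact DifferentiableAt.prodMk (differentiableAt_const _) (differentiableAt_pi.mpr fun i =>
          show DifferentiableAt ℝ (fun y => ∑ k, Rij R k j y * Rij R i k y) e from
          DifferentiableAt.fun_sum fun k _ => (hrD k j e).mul (hrD i k e))
      have h2 : ∀ i : Fin n, ((fderiv ℝ (fun y => R y (R y (eqv j))) e) (X e)).2 i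
          = ∑ k, (fderiv ℝ (Rij R k j) e (X e) * Rij R i k e
              + Rij R k j e * fderiv ℝ (Rij R i k) e (X e)) := by
        intro i
        rw [fderiv_snd_apply _ e hS2diff (X e) i,
          show (fun y => (R y (R y (eqv j))).2 i)
            = fun y => ∑ k, Rij R k j y * Rij R i k y from funext (hS2c i)]
        exact fderiv_sum_mul_s16 _ _ e _ (fun k => hrD k j e) (fun k => hrD i k e)
      have h3 : ∀ i : Fin n, ((fderiv ℝ X e) (R e (R e (eqv j)))).2 i
          = ∑ k, (∑ a, Rij R a j e * Rij R k a e)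
              * fderiv ℝ (fun y => (X y).2 i) e (eqv k) := by
        intro i
        rw [fderiv_snd_apply X e hXdiff _ i, fderiv_dir, hRv]
        simp only [zero_mul, zero_add]
        exact Finset.sum_congr rfl fun k _ => by rw [hS2c k e]
      have h4 : ∀ i : Fin n, (R e (R e ((fderiv ℝ X e) (eqv j)))).2 i
          = ∑ k, (∑ l, fderiv ℝ (fun y => (X y).2 l) e (eqv j) * Rij R k l e)
              * Rij R i k e := by
        intro i
        rw [Rapp R hRl hRv e (R e ((fderiv ℝ X e) (eqv j)))]
        simp only [hRv, zero_mul, zero_add]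
        refine Finset.sum_congr rfl fun k _ => ?_
        rw [Rapp R hRl hRv e ((fderiv ℝ X e) (eqv j))]
        simp only
        rw [fderiv_fst_apply X e hXdiff (eqv j), hdX0]
        simp only [zero_mul, zero_add]
        refine congrArg₂ _ (Finset.sum_congr rfl fun l _ => ?_) rfl
        rw [fderiv_snd_apply X e hXdiff (eqv j) l]
      have h5 : ∀ i : Fin n, ((fderiv ℝ (fun y => R y (eqv j)) e) (R e (X e))).2 i
          = fderiv ℝ (Rij R i j) e (R e (X e)) := by
        intro i
        rw [fderiv_snd_apply (fun y => R y (eqv j)) e hRej _ i]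
        rfl
      have hdFroz : ∀ (i : Fin n) (v : EE n), fderiv ℝ (fun y => (R y (X e)).2 i) e v
          = c * fderiv ℝ (Ri0 R i) e v + ∑ l, (X e).2 l * fderiv ℝ (Rij R i l) e v := by
        intro i v
        rw [show (fun y => (R y (X e)).2 i)
            = fun y => c * Ri0 R i y + ∑ l, (X e).2 l * Rij R i l y from funext fun y => by
          rw [Rapp R hRl hRv y (X e)]
          simp only [hc e]]
        rw [fderiv_cmul_addsum c _ _ _ e v (hsD i e) (fun l => differentiableAt_const _)
          (fun l => hrD i l e)]
        simp [fderiv_fun_const]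
      have h6 : ∀ i : Fin n, ((fderiv ℝ (fun y => R y (X e)) e) (R e (eqv j))).2 i
          = fderiv ℝ (fun y => (R y (X e)).2 i) e (R e (eqv j)) := fun i =>
        fderiv_snd_apply _ e hRXe _ i
      have hw1 : ((fderiv ℝ (fun y => R y (X e)) e) (eqv j)).1 = 0 := by
        rw [fderiv_fst_apply _ e hRXe (eqv j),
          show (fun y => (R y (X e)).1) = fun _ : EE n => (0:ℝ) from funext fun y => hRv y (X e)]
        simp
      have h7 : ∀ i : Fin n, (R e ((fderiv ℝ (fun y => R y (X e)) e) (eqv j))).2 i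
          = ∑ k, fderiv ℝ (fun y => (R y (X e)).2 k) e (eqv j) * Rij R i k e := by
        intro i
        rw [Rapp R hRl hRv e _]
        simp only [hw1, zero_mul, zero_add]
        refine Finset.sum_congr rfl fun k _ => ?_
        rw [fderiv_snd_apply _ e hRXe (eqv j) k]
      have hw2 : ((fderiv ℝ (fun y => R y (eqv j)) e) (X e)).1 = 0 := by
        rw [fderiv_fst_apply _ e hRej (X e),
          show (fun y => (R y (eqv j)).1) = fun _ : EE n => (0:ℝ) from funext fun y => hRv y (eqv j)]
        simp
      have h8 : ∀ i : Fin n, (R e ((fderiv ℝ (fun y => R y (eqv j)) e) (X e))).2 i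
          = ∑ k, fderiv ℝ (Rij R k j) e (X e) * Rij R i k e := by
        intro i
        rw [Rapp R hRl hRv e _]
        simp only [hw2, zero_mul, zero_add]
        refine Finset.sum_congr rfl fun k _ => ?_
        rw [fderiv_snd_apply _ e hRej (X e) k]
        rfl
      have hdirX : ∀ f : EE n → ℝ, fderiv ℝ f e (X e)
          = c * fderiv ℝ f e edt + ∑ l, (X e).2 l * fderiv ℝ f e (eqv l) := by
        intro f
        rw [fderiv_dir, hc e]
      have hdirRj : ∀ f : EE n → ℝ, fderiv ℝ f e (R e (eqv j))
          = ∑ k, Rij R k j e * fderiv ℝ f e (eqv k) := by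
        intro f
        rw [fderiv_dir, hRv]
        simp only [zero_mul, zero_add]
        rfl
      have hdirRX : ∀ f : EE n → ℝ, fderiv ℝ f e (R e (X e))
          = ∑ k, (c * Ri0 R k e + ∑ l, (X e).2 l * Rij R k l e) * fderiv ℝ f e (eqv k) := by
        intro f
        rw [fderiv_dir, hRv]
        simp only [zero_mul, zero_add]
        exact Finset.sum_congr rfl fun k _ => by rw [hYk k e]
      simp only [hdZ, h2, h3, h4, h5, h6, h7, h8, hdFroz]
      simp only [hdY]
      simp only [hdirRX, hdirRj, hdirX]
      simp only [hYk, hc e]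
      obtain ⟨Dr, hDr⟩ : ∃ Dr : Fin n → Fin n → Fin n → ℝ,
          ∀ i k a, (fderiv ℝ (Rij R i k) e) (eqv a) = Dr i k a := ⟨_, fun _ _ _ => rfl⟩
      obtain ⟨Dt, hDt⟩ : ∃ Dt : Fin n → Fin n → ℝ,
          ∀ i k, (fderiv ℝ (Rij R i k) e) edt = Dt i k := ⟨_, fun _ _ => rfl⟩
      obtain ⟨Ds, hDs⟩ : ∃ Ds : Fin n → Fin n → ℝ,
          ∀ i a, (fderiv ℝ (Ri0 R i) e) (eqv a) = Ds i a := ⟨_, fun _ _ => rfl⟩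
      obtain ⟨DX, hDX⟩ : ∃ DX : Fin n → Fin n → ℝ,
          ∀ l a, (fderiv ℝ (fun y => (X y).2 l) e) (eqv a) = DX l a := ⟨_, fun _ _ => rfl⟩
      obtain ⟨rr, hrr⟩ : ∃ rr : Fin n → Fin n → ℝ, ∀ i k, Rij R i k e = rr i k := ⟨_, fun _ _ => rfl⟩
      obtain ⟨ss, hss⟩ : ∃ ss : Fin n → ℝ, ∀ i, Ri0 R i e = ss i := ⟨_, fun _ => rfl⟩
      obtain ⟨xx, hxx⟩ : ∃ xx : Fin n → ℝ, ∀ l, (X e).2 l = xx l := ⟨_, fun _ => rfl⟩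
      simp only [hDr, hDt, hDs, hDX, hrr, hss, hxx]
      exact bigsum j c p xx ss rr Dt Ds DX Dr
end
end

section
/- The canonical Poisson map P on J¹τ*, corresponding to Λ = ∂/∂q^i ∧ ∂/∂p_i, satisfies P(π*α) = α^v for 1-forms α on E, P(dF_X) = −X̃ for vertical X on E, and P(R^h) = R^v for (1,1) tensors R on E with R(dt)=0. Moreover, the complete lift R̃ commutes with P: P ∘ R̃ = R̃ ∘ P as maps from 1-forms to vector fields on J¹τ*. -/
noncomputable section

open scoped BigOperators

lemma fderiv_FX {n : ℕ} (X : EE n → EE n) (hX : Differentiable ℝ X) (m v : MM n) :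
    fderiv ℝ (FX X) m v =
      (∑ i, v.2 i * (X m.1).2 i) +
      ∑ i, m.2 i * fderiv ℝ (fun e => (X e).2 i) m.1 v.1 := by
  have hg : ∀ j : Fin n, Differentiable ℝ (fun e : EE n => (X e).2 j) :=
    fun j => (differentiable_pi.mp hX.snd) j
  have h : HasFDerivAt (FX X)
      (∑ i : Fin n, (m.2 i • ((fderiv ℝ (fun e : EE n => (X e).2 i) m.1).comp
          (ContinuousLinearMap.fst ℝ (EE n) (Fin n → ℝ)))
        + (X m.1).2 i • ((ContinuousLinearMap.proj i).comp
          (ContinuousLinearMap.snd ℝ (EE n) (Fin n → ℝ))))) m := by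
    apply HasFDerivAt.fun_sum
    intro i _
    exact (((ContinuousLinearMap.proj i).comp
      (ContinuousLinearMap.snd ℝ (EE n) (Fin n → ℝ))).hasFDerivAt).mul
      (((hg i m.1).hasFDerivAt.comp m hasFDerivAt_fst))
  rw [h.fderiv]
  simp [ContinuousLinearMap.sum_apply, Finset.sum_add_distrib, mul_comm, add_comm]

/-- The canonical Poisson map `P` on `J¹τ*` (of `Λ = ∂/∂qⁱ ∧ ∂/∂pᵢ`)
satisfies `P(π*α) = α^v` for 1-forms `α` on `E`, `P(dF_X) = −X̃` for vertical `X`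
on `E`, and `P(R^h) = R^v` for (1,1) tensors `R` on `E` with `R(dt) = 0`.
Moreover the complete lift `R̃` commutes with `P`:  `P ∘ R̃ = R̃ ∘ P` as maps
from 1-forms to vector fields on `J¹τ*`. -/
theorem statement18 {n : ℕ} (R : EE n → EE n → EE n)
    (hRl : ∀ e, IsLinearMap ℝ (R e)) (hRv : ∀ e u, (R e u).1 = 0)
    (hRs : ∀ u, ContDiff ℝ (⊤ : ℕ∞) (fun e => R e u)) :
    (∀ α : EE n → EE n, ∀ m : MM n,
      Pmap (fun x : MM n => (α x.1, (0 : Fin n → ℝ))) m = vlift1 α m) ∧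
    (∀ X : EE n → EE n, ContDiff ℝ (⊤ : ℕ∞) X → (∀ e, (X e).1 = 0) →
      ∀ m : MM n, Pmap (dFc X) m = - clift X m) ∧
    (∀ m : MM n, Pmap (hliftC R) m = vlift11 R m) ∧
    (∀ σ : MM n → MM n, ∀ m : MM n,
      Pmap (adjM (tlift R) σ) m = tlift R m (Pmap σ m)) := by
  refine ⟨?_, ?_, ?_, ?_⟩
  · intro α m
    simp [Pmap, vlift1]
    rfl
  · intro X hX hXv m
    have hXd : Differentiable ℝ X := hX.differentiable (by simp)
    have key := fderiv_FX X hXd m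
    unfold Pmap dFc clift
    refine Prod.ext (Prod.ext ?_ ?_) ?_
    · simp [Prod.fst_neg, hXv m.1]
    · funext i
      dsimp only
      rw [key (0, Pi.single i 1)]
      simp [Pi.single_apply, Finset.sum_ite_eq', hXv]
    · funext i
      dsimp only
      rw [key ((eqv i : EE n), 0)]
      simp
  · intro m
    simp [Pmap, hliftC, vlift11]
    rfl
  · intro σ m
    unfold Pmap adjM tlift pairM pairE
    refine Prod.ext (Prod.ext rfl ?_) ?_
    · funext i
      simp [eqv, Pi.single_apply, Finset.sum_ite_eq', Finset.mul_sum, edt,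
        Finset.sum_neg_distrib, mul_comm]
    · funext j
      simp [eqv, Pi.single_apply, Finset.sum_ite_eq', edt]
      rw [← Finset.sum_neg_distrib]
      refine Finset.sum_congr rfl fun k _ => ?_
      simp only [mul_sub, Finset.sum_sub_distrib]
      ring
end
end
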